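/- The weak internal transition relation ⟹ is closed under convex combinations: if μ_j ⟹ ν_j for j in a finite index set J and ∑_j q_j = 1 with q_j ≥ 0, then ∑_j q_j μ_j ⟹ ∑_j q_j ν_j. -/

import Mathlib

/-- A finite-support probability distribution. -/
structure FDist (Con : Type*) where
  toFun : Con → ℝ
  nonneg : ∀ c, 0 ≤ toFun c
  finite : (Function.support toFun).Finite
  sum_one : ∑ᶠ c, toFun c = 1

/-- `δ` is a weight function for `(μ, ν)` w.r.t. the relation `R`. -/
def IsWeight {Con : Type*} (R : Con → Con → Prop) (μ ν : FDist Con)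
    (δ : Con → Con → ℝ) : Prop :=
  (∀ c d, 0 ≤ δ c d ∧ δ c d ≤ 1) ∧
  (Function.support (Function.uncurry δ)).Finite ∧
  (∀ c, ∑ᶠ d, δ c d = μ.toFun c) ∧
  (∀ d, ∑ᶠ c, δ c d = ν.toFun d) ∧
  (∀ c d, 0 < δ c d → R c d)

/-- The lifting of a relation to finite-support distributions via weight functions. -/
def Lift {Con : Type*} (R : Con → Con → Prop) (μ ν : FDist Con) : Prop :=
  ∃ δ, IsWeight R μ ν δ

/-- The point (Dirac) distribution at `c`. -/
noncomputable def pointDist {Con : Type*} [DecidableEq Con] (c : Con) : FDist Con where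
  toFun x := if x = c then 1 else 0
  nonneg x := by (try dsimp); split <;> norm_num
  finite := Set.Finite.subset (Set.finite_singleton c) (fun x hx => by
    by_contra h
    simp only [Function.mem_support] at hx
    simp only [Set.mem_singleton_iff] at h
    simp [h] at hx)
  sum_one := by
    rw [finsum_eq_single _ c]
    · simp
    · intro x hx; simp [hx]

/-- A probabilistic labeled transition system with a distinguished silent action `τ`. -/
structure PLTS (Con Act : Type*) where
  trans : Con → Act → FDist Con → Prop
  tau : Act

/-- The weak internal transition relation `⟹` on finite-support distributions:
the smallest relation such that (1) `δ_C ⟹ δ_C`; (2) if `C →τ μ` and `μ ⟹ ν`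
then `δ_C ⟹ ν`; (3) closure under convex combinations of point decompositions. -/
inductive Weak {Con Act : Type*} [DecidableEq Con] (L : PLTS Con Act) :
    FDist Con → FDist Con → Prop
  | refl (C : Con) : Weak L (pointDist C) (pointDist C)
  | step {C : Con} {μ ν : FDist Con} :
      L.trans C L.tau μ → Weak L μ ν → Weak L (pointDist C) ν
  | mix {n : ℕ} (p : Fin n → ℝ) (C : Fin n → Con) (ν : Fin n → FDist Con)
      (μ ξ : FDist Con)
      (hp : ∀ i, 0 ≤ p i) (hs : ∑ i, p i = 1)
      (hμ : ∀ x, μ.toFun x = ∑ i, if C i = x then p i else 0)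
      (hν : ∀ i, Weak L (pointDist (C i)) (ν i))
      (hξ : ∀ x, ξ.toFun x = ∑ i, p i * (ν i).toFun x) :
      Weak L μ ξ


theorem weak_decomp {Con Act : Type*} [DecidableEq Con] (L : PLTS Con Act)
    {μ ν : FDist Con} (h : Weak L μ ν) :
    ∃ (n : ℕ) (p : Fin n → ℝ) (C : Fin n → Con) (νi : Fin n → FDist Con),
      (∀ i, 0 ≤ p i) ∧ (∑ i, p i = 1) ∧
      (∀ x, μ.toFun x = ∑ i, if C i = x then p i else 0) ∧
      (∀ i, Weak L (pointDist (C i)) (νi i)) ∧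
      (∀ x, ν.toFun x = ∑ i, p i * (νi i).toFun x) := by
  induction h with
  | refl C =>
      refine ⟨1, fun _ => 1, fun _ => C, fun _ => pointDist C, ?_, ?_, ?_,
        fun _ => Weak.refl C, ?_⟩ <;> simp [pointDist, eq_comm]
  | @step C μ ν ht hw ih =>
      refine ⟨1, fun _ => 1, fun _ => C, fun _ => ν, ?_, ?_, ?_,
        fun _ => Weak.step ht hw, ?_⟩ <;> simp [pointDist, eq_comm]
  | mix p C ν μ ξ hp hs hμ hν hξ ih =>
      exact ⟨_, p, C, ν, hp, hs, hμ, hν, hξ⟩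

/-- `⟹` is closed under convex combinations: if `μ_j ⟹ ν_j` for `j` in a finite
index set and `∑ q_j = 1` with `q_j ≥ 0`, then `∑ q_j μ_j ⟹ ∑ q_j ν_j`. -/
theorem weak_convex {Con Act : Type*} [DecidableEq Con] (L : PLTS Con Act)
    {m : ℕ} (q : Fin m → ℝ) (μs νs : Fin m → FDist Con) (μ ν : FDist Con)
    (hq : ∀ j, 0 ≤ q j) (hqs : ∑ j, q j = 1)
    (h : ∀ j, Weak L (μs j) (νs j))
    (hμ : ∀ x, μ.toFun x = ∑ j, q j * (μs j).toFun x)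
    (hν : ∀ x, ν.toFun x = ∑ j, q j * (νs j).toFun x) :
    Weak L μ ν := by
  choose n p C νi hp hs hd hw hnd using fun j => weak_decomp L (h j)
  let e := (Fintype.equivFin (Σ j : Fin m, Fin (n j))).symm
  refine Weak.mix (fun i => q (e i).1 * p (e i).1 (e i).2)
    (fun i => C (e i).1 (e i).2) (fun i => νi (e i).1 (e i).2) μ ν
    (fun i => mul_nonneg (hq _) (hp _ _)) ?_ ?_ (fun i => hw _ _) ?_
  · rw [Equiv.sum_comp e (fun s : Σ j, Fin (n j) => q s.1 * p s.1 s.2),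
      ← Finset.univ_sigma_univ, Finset.sum_sigma]
    simp_rw [← Finset.mul_sum]
    simp [hs, hqs]
  · intro x
    rw [Equiv.sum_comp e (fun s : Σ j, Fin (n j) =>
        if C s.1 s.2 = x then q s.1 * p s.1 s.2 else 0),
      ← Finset.univ_sigma_univ, Finset.sum_sigma, hμ x]
    refine Finset.sum_congr rfl fun j _ => ?_
    rw [hd j x, Finset.mul_sum]
    exact Finset.sum_congr rfl fun i _ => by rw [mul_ite, mul_zero]
  · intro x
    rw [Equiv.sum_comp e (fun s : Σ j, Fin (n j) =>
        q s.1 * p s.1 s.2 * (νi s.1 s.2).toFun x),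
      ← Finset.univ_sigma_univ, Finset.sum_sigma, hν x]
    refine Finset.sum_congr rfl fun j _ => ?_
    rw [hnd j x, Finset.mul_sum]
    exact Finset.sum_congr rfl fun i _ => by ring
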